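/- One-step recursive feasibility (induction step in the proof of Theorem 1): let a stored edge trajectory of length T be given, and let the baseline capacity c_{t0} satisfy 0 ≤ c_{t0} ≤ C − c̃_T. Suppose ((c_k, χ_k)_{k=0}^N, (u_k)_{k=0}^{N−1}) is a feasible N-step plan from (c_0, χ_0) with baseline c_{t0} whose terminal witness s* satisfies s* < T. Then the state sequence ((c_1, χ_1), …, (c_N, χ_N), (c_N + g_c(χ̃_{s*}, ũ_{s*}), g_χ(χ̃_{s*}, ũ_{s*}))) together with the input sequence (u_1, …, u_{N−1}, ũ_{s*}) is a feasible N-step plan from (c_1, χ_1) with baseline c_{t0}, with terminal witness s* + 1. -/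

import Mathlib

/-- A 'stored edge trajectory' of length `T`: inputs `ut 0, …, ut (T-1) ∈ U`
together with the trajectory `(ct, χt)` from `(0, χt 0)` under these inputs,
such that `χt t ∈ X` for all `t ∈ [0, T]` and `ct T ≤ C`. -/
def StoredEdge {L p m : ℕ}
    (gc : (Fin p → ℝ) → (Fin m → ℝ) → (Fin L → ℝ))
    (gχ : (Fin p → ℝ) → (Fin m → ℝ) → (Fin p → ℝ))
    (X : Set (Fin p → ℝ)) (U : Set (Fin m → ℝ)) (C : Fin L → ℝ)
    (T : ℕ) (ut : ℕ → Fin m → ℝ)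
    (ct : ℕ → Fin L → ℝ) (χt : ℕ → Fin p → ℝ) : Prop :=
  (∀ t, t < T → ut t ∈ U) ∧
  ct 0 = 0 ∧
  (∀ t, t < T → ct (t + 1) = ct t + gc (χt t) (ut t)) ∧
  (∀ t, t < T → χt (t + 1) = gχ (χt t) (ut t)) ∧
  (∀ t, t ≤ T → χt t ∈ X) ∧
  ct T ≤ C

/-- A 'feasible N-step plan' from the state `(c0, χ0)` with baseline capacity
`ct0`, relative to a stored edge trajectory `(ct, χt)` of length `T`, with
terminal witness `s`: a state sequence `(cs, χs)` starting at `(c0, χ0)` and an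
input sequence `us` with values in `U`, evolving under the separable capacity
dynamics, such that `χs k ∈ X` and `0 ≤ cs k ≤ C` for all `k ∈ [0, N]`, and the
terminal witness `s ∈ [0, T]` satisfies `χs N = χt s` and `cs N - ct0 ≤ ct s`. -/
def FeasiblePlanWith {L p m : ℕ}
    (gc : (Fin p → ℝ) → (Fin m → ℝ) → (Fin L → ℝ))
    (gχ : (Fin p → ℝ) → (Fin m → ℝ) → (Fin p → ℝ))
    (X : Set (Fin p → ℝ)) (U : Set (Fin m → ℝ)) (C : Fin L → ℝ)
    (T : ℕ) (ct : ℕ → Fin L → ℝ) (χt : ℕ → Fin p → ℝ)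
    (N : ℕ) (ct0 : Fin L → ℝ)
    (c0 : Fin L → ℝ) (χ0 : Fin p → ℝ)
    (cs : ℕ → Fin L → ℝ) (χs : ℕ → Fin p → ℝ) (us : ℕ → Fin m → ℝ)
    (s : ℕ) : Prop :=
  cs 0 = c0 ∧ χs 0 = χ0 ∧
  (∀ k, k < N → us k ∈ U) ∧
  (∀ k, k < N → cs (k + 1) = cs k + gc (χs k) (us k)) ∧
  (∀ k, k < N → χs (k + 1) = gχ (χs k) (us k)) ∧
  (∀ k, k ≤ N → χs k ∈ X) ∧
  (∀ k, k ≤ N → 0 ≤ cs k ∧ cs k ≤ C) ∧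
  s ≤ T ∧ χs N = χt s ∧ cs N - ct0 ≤ ct s

/-- One-step recursive feasibility: if
`((cs k, χs k))_{k=0}^N, (us k)_{k=0}^{N-1}` is a feasible `N`-step plan from
`(cs 0, χs 0)` with baseline `ct0` and terminal witness `s < T`, then the
shifted-and-appended state sequence
`((cs 1, χs 1), …, (cs N, χs N), (cs N + g_c(χt s, ut s), g_χ(χt s, ut s)))`
with input sequence `(us 1, …, us (N-1), ut s)` is a feasible `N`-step plan
from `(cs 1, χs 1)` with baseline `ct0` and terminal witness `s + 1`. -/
theorem one_step_recursive_feasibility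
    (L p m : ℕ)
    (gc : (Fin p → ℝ) → (Fin m → ℝ) → (Fin L → ℝ))
    (gχ : (Fin p → ℝ) → (Fin m → ℝ) → (Fin p → ℝ))
    (hgc : ∀ χ u, 0 ≤ gc χ u)
    (X : Set (Fin p → ℝ)) (U : Set (Fin m → ℝ)) (C : Fin L → ℝ) (hC : 0 ≤ C)
    (T : ℕ) (ut : ℕ → Fin m → ℝ) (ct : ℕ → Fin L → ℝ) (χt : ℕ → Fin p → ℝ)
    (hstored : StoredEdge gc gχ X U C T ut ct χt)
    (N : ℕ) (hN : 1 ≤ N)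
    (ct0 : Fin L → ℝ) (h0 : 0 ≤ ct0) (h1 : ct0 ≤ C - ct T)
    (cs : ℕ → Fin L → ℝ) (χs : ℕ → Fin p → ℝ) (us : ℕ → Fin m → ℝ) (s : ℕ)
    (hplan : FeasiblePlanWith gc gχ X U C T ct χt N ct0 (cs 0) (χs 0) cs χs us s)
    (hs : s < T) :
    FeasiblePlanWith gc gχ X U C T ct χt N ct0 (cs 1) (χs 1)
      (fun k => if k < N then cs (k + 1) else cs N + gc (χt s) (ut s))
      (fun k => if k < N then χs (k + 1) else gχ (χt s) (ut s))
      (fun k => if k + 1 < N then us (k + 1) else ut s)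
      (s + 1) := by
  obtain ⟨hUt, hct0, hctd, hχtd, hXt, hctT⟩ := hstored
  obtain ⟨-, -, husU, hcsd, hχsd, hXs, hcb, hsT, hχN, hcN⟩ := hplan
  have hNpos : 0 < N := hN
  have hmono : ∀ a b : ℕ, a ≤ b → b ≤ T → ct a ≤ ct b := by
    intro a b hab hbT
    induction b with
    | zero => simp [Nat.le_zero.mp hab]
    | succ n ih =>
      rcases Nat.lt_or_ge a (n + 1) with h | h
      · calc ct a ≤ ct n := ih (Nat.lt_succ_iff.mp h) (by omega)
          _ ≤ ct (n + 1) := by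
              rw [hctd n (by omega)]
              exact le_add_of_nonneg_right (hgc _ _)
      · have : a = n + 1 := le_antisymm hab h
        simp [this]
  refine ⟨by simp [hNpos], by simp [hNpos], ?_, ?_, ?_, ?_, ?_, by omega, ?_, ?_⟩
  · intro k hk
    by_cases h : k + 1 < N
    · simpa [h] using husU (k + 1) h
    · simpa [h] using hUt s hs
  · intro k hk
    by_cases h : k + 1 < N
    · simp only [if_pos hk, if_pos h]
      exact hcsd (k + 1) h
    · have hkN : k + 1 = N := by omega
      simp only [if_pos hk, if_neg h]
      rw [hkN, hχN]
  · intro k hk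
    by_cases h : k + 1 < N
    · simp only [if_pos hk, if_pos h]
      exact hχsd (k + 1) h
    · have hkN : k + 1 = N := by omega
      simp only [if_pos hk, if_neg h]
      rw [hkN, hχN]
  · intro k hk
    by_cases h : k < N
    · simpa [h] using hXs (k + 1) (by omega)
    · have : gχ (χt s) (ut s) = χt (s + 1) := (hχtd s hs).symm
      simp only [if_neg h, this]
      exact hXt (s + 1) (by omega)
  · intro k hk
    by_cases h : k < N
    · simpa [h] using hcb (k + 1) (by omega)
    · simp only [if_neg h]
      constructor
      · exact add_nonneg (hcb N le_rfl).1 (hgc _ _)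
      · have h2 : cs N ≤ ct s + ct0 := by
          have := hcN
          calc cs N = cs N - ct0 + ct0 := by ring
            _ ≤ ct s + ct0 := add_le_add_left hcN ct0
        calc cs N + gc (χt s) (ut s) ≤ (ct s + ct0) + gc (χt s) (ut s) :=
              add_le_add_left h2 _
          _ = ct (s + 1) + ct0 := by rw [hctd s hs]; ring
          _ ≤ ct T + ct0 := add_le_add_left (hmono (s + 1) T (by omega) le_rfl) _
          _ ≤ ct T + (C - ct T) := add_le_add_right h1 _
          _ = C := by ring
  · simp only [lt_irrefl, if_neg (lt_irrefl N)]
    exact (hχtd s hs).symm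
  · simp only [if_neg (lt_irrefl N)]
    calc cs N + gc (χt s) (ut s) - ct0 = (cs N - ct0) + gc (χt s) (ut s) := by ring
      _ ≤ ct s + gc (χt s) (ut s) := add_le_add_left hcN _
      _ = ct (s + 1) := (hctd s hs).symm
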